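/- arXiv:2411.16578 — 6 statements merged into one kernel-verified Lean document; each statement's English description precedes it below -/
import Mathlib

section
/- A graph G has a vertex cover of size at most k if and only if the graph G-hat (same vertex and edge set, with every edge assigned weight 1) has a forest cover with weighted index at most k. -/
open SimpleGraph

private lemma walk_reach {W : Type*} (H : SimpleGraph W) (u v : W) {x y : W}
    (p : H.Walk x y) :
    (H \ fromEdgeSet {s(u,v)}).Reachable x y ∨ (H \ fromEdgeSet {s(u,v)}).Reachable x u ∨
      (H \ fromEdgeSet {s(u,v)}).Reachable x v := by
  induction p with
  | nil => exact Or.inl (Reachable.refl _)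
  | @cons a b y h q ih =>
    by_cases he : s(a,b) = s(u,v)
    · rw [Sym2.eq_iff] at he
      rcases he with ⟨rfl, rfl⟩ | ⟨rfl, rfl⟩
      · exact Or.inr (Or.inl (Reachable.refl _))
      · exact Or.inr (Or.inr (Reachable.refl _))
    · have hadj : (H \ fromEdgeSet {s(u,v)}).Adj a b := by
        rw [sdiff_adj, fromEdgeSet_adj]
        exact ⟨h, by simp [he]⟩
      rcases ih with h1 | h1 | h1
      · exact Or.inl (hadj.reachable.trans h1)
      · exact Or.inr (Or.inl (hadj.reachable.trans h1))
      · exact Or.inr (Or.inr (hadj.reachable.trans h1))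

private lemma comp_card_bot {W : Type*} [Finite W] :
    Nat.card (⊥ : SimpleGraph W).ConnectedComponent = Nat.card W := by
  refine (Nat.card_eq_of_bijective (fun w => (⊥ : SimpleGraph W).connectedComponentMk w)
    ⟨fun a b hab => ?_, fun c => c.ind (fun w => ⟨w, rfl⟩)⟩).symm
  rw [ConnectedComponent.eq] at hab
  exact reachable_bot.mp hab

private lemma key_ineq {W : Type*} [Finite W] (H : SimpleGraph W) :
    Nat.card W ≤ Nat.card H.edgeSet + Nat.card H.ConnectedComponent := by
  classical
  generalize hn : Nat.card H.edgeSet = n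
  induction n using Nat.strong_induction_on generalizing H with
  | _ n ih =>
  rcases eq_or_ne H ⊥ with rfl | hne
  · rw [comp_card_bot]; omega
  · -- pick an edge
    have hE : H.edgeSet.Nonempty := by
      rw [Set.nonempty_iff_ne_empty, ne_eq, edgeSet_eq_empty]
      exact hne
    obtain ⟨e, he⟩ := hE
    induction e with
    | _ u v =>
    set H' := H \ fromEdgeSet {s(u,v)} with hH'
    have hedge : H'.edgeSet = H.edgeSet \ {s(u,v)} := by
      rw [hH', edgeSet_sdiff, edgeSet_fromEdgeSet, edgeSet_sdiff_sdiff_isDiag]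
    have hcard' : Nat.card H'.edgeSet = n - 1 := by
      rw [Nat.card_coe_set_eq, hedge, Set.ncard_diff_singleton_of_mem he,
        ← Nat.card_coe_set_eq, hn]
    have hn1 : 1 ≤ n := by
      rw [← hn, Nat.card_coe_set_eq]
      haveI : Nonempty H.edgeSet := ⟨⟨_, he⟩⟩
      rw [← Nat.card_coe_set_eq]
      exact Nat.card_pos
    -- components of H' inject into Option (components of H)
    have hle : H' ≤ H := sdiff_le
    let θ : H'.ConnectedComponent → H.ConnectedComponent :=
      ConnectedComponent.map (Hom.ofLE hle)
    have hθ : ∀ c1 c2 : H'.ConnectedComponent, c1 ≠ c2 → θ c1 = θ c2 →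
        (c1 = H'.connectedComponentMk u ∨ c1 = H'.connectedComponentMk v) ∧
        (c2 = H'.connectedComponentMk u ∨ c2 = H'.connectedComponentMk v) := by
      intro c1 c2 hne12 heq
      induction c1 using ConnectedComponent.ind with
      | _ x =>
      induction c2 using ConnectedComponent.ind with
      | _ y =>
      simp only [θ, ConnectedComponent.map_mk, Hom.ofLE_apply,
        ConnectedComponent.eq] at heq
      obtain ⟨p⟩ := heq
      have h1 := walk_reach H u v p
      have h2 := walk_reach H u v p.reverse
      rcases h1 with h1 | h1 | h1
      · exact absurd (ConnectedComponent.sound h1) hne12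
      · rcases h2 with h2 | h2 | h2
        · exact absurd (ConnectedComponent.sound h2.symm) hne12
        · exact ⟨Or.inl (ConnectedComponent.sound h1),
            Or.inl (ConnectedComponent.sound h2)⟩
        · exact ⟨Or.inl (ConnectedComponent.sound h1),
            Or.inr (ConnectedComponent.sound h2)⟩
      · rcases h2 with h2 | h2 | h2
        · exact absurd (ConnectedComponent.sound h2.symm) hne12
        · exact ⟨Or.inr (ConnectedComponent.sound h1),
            Or.inl (ConnectedComponent.sound h2)⟩
        · exact ⟨Or.inr (ConnectedComponent.sound h1),
            Or.inr (ConnectedComponent.sound h2)⟩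
    have hcomp : Nat.card H'.ConnectedComponent ≤ Nat.card H.ConnectedComponent + 1 := by
      have hinj : Function.Injective
          (fun c : H'.ConnectedComponent =>
            if c = H'.connectedComponentMk v then (none : Option H.ConnectedComponent)
            else some (θ c)) := by
        intro c1 c2 h12
        dsimp only at h12
        by_cases h1 : c1 = H'.connectedComponentMk v
        · by_cases h2 : c2 = H'.connectedComponentMk v
          · rw [h1, h2]
          · rw [if_pos h1, if_neg h2] at h12
            exact absurd h12 (by simp)
        · by_cases h2 : c2 = H'.connectedComponentMk v
          · rw [if_neg h1, if_pos h2] at h12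
            exact absurd h12 (by simp)
          · rw [if_neg h1, if_neg h2, Option.some.injEq] at h12
            by_contra hne12
            obtain ⟨ha, hb⟩ := hθ c1 c2 hne12 h12
            rcases ha with ha | ha
            · rcases hb with hb | hb
              · exact hne12 (ha.trans hb.symm)
              · exact h2 hb
            · exact h1 ha
      haveI : Fintype H.ConnectedComponent := @Fintype.ofFinite _ (Quot.finite _)
      calc Nat.card H'.ConnectedComponent ≤ Nat.card (Option H.ConnectedComponent) :=
            Nat.card_le_card_of_injective _ hinj
        _ = Nat.card H.ConnectedComponent + 1 := by
            simp [Nat.card_eq_fintype_card]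
    have := ih (n - 1) (by omega) H' hcard'
    omega

/-- G has a vertex cover of size at most k iff the graph with every edge of
weight 1 has a forest cover with weighted index at most k.  A forest cover is
an acyclic subgraph F on a vertex set S that is a vertex cover; with all
weights 1 its weighted index is (number of edges of F) + (number of connected
components of F on S). -/
theorem stmt_2 {V : Type} [Fintype V] (G : SimpleGraph V) (k : ℕ) :
    (∃ C : Finset V, C.card ≤ k ∧ ∀ u v, G.Adj u v → u ∈ C ∨ v ∈ C) ↔
    (∃ (S : Finset V) (F : SimpleGraph V),
      F ≤ G ∧ F.IsAcyclic ∧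
      (∀ u v, F.Adj u v → u ∈ S ∧ v ∈ S) ∧
      (∀ u v, G.Adj u v → u ∈ S ∨ v ∈ S) ∧
      Nat.card F.edgeSet + Nat.card (F.induce (↑S : Set V)).ConnectedComponent ≤ k) := by
  constructor
  · rintro ⟨C, hC, hcov⟩
    refine ⟨C, ⊥, bot_le, isAcyclic_bot, by simp, hcov, ?_⟩
    · have hbot : (⊥ : SimpleGraph V).induce (↑C : Set V) = ⊥ := by
        ext a b; simp
      rw [hbot, comp_card_bot]
      simp only [edgeSet_bot]
      have : Nat.card (∅ : Set (Sym2 V)) = 0 := by simp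
      rw [this, Nat.card_coe_set_eq, Set.ncard_coe_finset]
      omega
  · rintro ⟨S, F, _, _, hFS, hcov, hcard⟩
    refine ⟨S, ?_, hcov⟩
    have key := key_ineq (F.induce (↑S : Set V))
    have hedge : Nat.card (F.induce (↑S : Set V)).edgeSet ≤ Nat.card F.edgeSet :=
      Nat.card_le_card_of_injective (Embedding.induce (↑S : Set V) (G := F)).mapEdgeSet
        (Embedding.mapEdgeSet _).injective
    have hS : Nat.card (↑S : Set V) = S.card := by
      rw [Nat.card_coe_set_eq, Set.ncard_coe_finset]
    omega
end

section
/- Let G = (V,E) be a graph with edge weights in {0,1}. Let E_0 be the edges of weight 0, V_0 the set of vertices incident to some edge of E_0, V_1 = V \ V_0, and let G_1 be the subgraph induced on V_1. If k is the number of connected components of the subgraph (V_0, E_0) and M is a maximum matching of G_1, then every forest cover of G has weighted index at least k + |M|. -/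
open SimpleGraph

private lemma key_reach {W : Type} {H : SimpleGraph W} (u v : W) {x y : W}
    (p : H.Walk x y) :
    (H.deleteEdges {s(u,v)}).Reachable x y ∨ (H.deleteEdges {s(u,v)}).Reachable x u ∨
      (H.deleteEdges {s(u,v)}).Reachable x v := by
  induction p with
  | nil => exact Or.inl (Reachable.refl _)
  | @cons a b c h p ih =>
    by_cases he : s(a, b) = s(u, v)
    · rcases Sym2.eq_iff.mp he with ⟨rfl, rfl⟩ | ⟨rfl, rfl⟩
      · exact Or.inr (Or.inl (Reachable.refl _))
      · exact Or.inr (Or.inr (Reachable.refl _))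
    · have hadj : (H.deleteEdges {s(u,v)}).Adj a b := by
        rw [deleteEdges_adj]
        exact ⟨h, by simpa using he⟩
      rcases ih with h' | h' | h'
      · exact Or.inl (hadj.reachable.trans h')
      · exact Or.inr (Or.inl (hadj.reachable.trans h'))
      · exact Or.inr (Or.inr (hadj.reachable.trans h'))

private lemma comp_delete_one {W : Type} [Finite W] (H : SimpleGraph W) (e : Sym2 W) :
    Nat.card (H.deleteEdges {e}).ConnectedComponent ≤ Nat.card H.ConnectedComponent + 1 := by
  classical
  induction e using Sym2.ind with
  | _ u v =>
  set H' := H.deleteEdges {s(u,v)} with hH'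
  let φ : H' →g H := Hom.ofLE (deleteEdges_le _)
  let Φ : H'.ConnectedComponent → H.ConnectedComponent ⊕ Unit := fun c =>
    if c = H'.connectedComponentMk v then Sum.inr () else Sum.inl (c.map φ)
  have hΦ : Function.Injective Φ := by
    intro c1 c2 h
    obtain ⟨x, rfl⟩ := c1.exists_rep
    obtain ⟨y, rfl⟩ := c2.exists_rep
    simp only [Φ] at h
    by_cases h1 : @Eq H'.ConnectedComponent (Quot.mk H'.Reachable x) (H'.connectedComponentMk v)
    · by_cases h2 : @Eq H'.ConnectedComponent (Quot.mk H'.Reachable y) (H'.connectedComponentMk v)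
      · exact h1.trans h2.symm
      · rw [if_pos h1, if_neg h2] at h
        exact absurd h (by simp)
    · by_cases h2 : @Eq H'.ConnectedComponent (Quot.mk H'.Reachable y) (H'.connectedComponentMk v)
      · rw [if_neg h1, if_pos h2] at h
        exact absurd h (by simp)
      · rw [if_neg h1, if_neg h2] at h
        have h' : H.connectedComponentMk x = H.connectedComponentMk y := by
          exact_mod_cast Sum.inl.inj h
        have hreach : H.Reachable x y := ConnectedComponent.exact h'
        obtain ⟨p⟩ := hreach
        rcases key_reach u v p with h' | h' | h'
        · exact ConnectedComponent.sound h'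
        · rcases key_reach u v p.reverse with h'' | h'' | h''
          · exact ConnectedComponent.sound h''.symm
          · exact ConnectedComponent.sound (h'.trans h''.symm)
          · exact absurd (ConnectedComponent.sound h'') h2
        · exact absurd (ConnectedComponent.sound h') h1
  calc Nat.card H'.ConnectedComponent ≤ Nat.card (H.ConnectedComponent ⊕ Unit) :=
        Nat.card_le_card_of_injective Φ hΦ
    _ = Nat.card H.ConnectedComponent + 1 := by simp [Nat.card_sum]

private lemma comp_deleteEdges_le {W : Type} [Finite W] (H : SimpleGraph W)
    (D : Set (Sym2 W)) :
    Nat.card (H.deleteEdges D).ConnectedComponent ≤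
      Nat.card H.ConnectedComponent + (H.edgeSet ∩ D).ncard := by
  classical
  generalize hn : (H.edgeSet ∩ D).ncard = n
  induction n generalizing H with
  | zero =>
    have hempty : H.edgeSet ∩ D = ∅ := (Set.ncard_eq_zero (Set.toFinite _)).mp hn
    have : H.deleteEdges D = H := by
      ext a b
      rw [deleteEdges_adj]
      refine ⟨fun h => h.1, fun h => ⟨h, fun hD => ?_⟩⟩
      have hmem : s(a, b) ∈ H.edgeSet ∩ D := ⟨h, hD⟩
      rw [hempty] at hmem
      simpa using hmem
    rw [this]
    omega
  | succ n ih =>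
    have hne : (H.edgeSet ∩ D).Nonempty := Set.nonempty_of_ncard_ne_zero (by omega)
    obtain ⟨e, heH, heD⟩ := hne
    have h1 : H.deleteEdges D = (H.deleteEdges {e}).deleteEdges D := by
      ext a b
      simp only [deleteEdges_adj, Set.mem_singleton_iff]
      constructor
      · rintro ⟨h, hD⟩
        exact ⟨⟨h, fun hh => hD (hh ▸ heD)⟩, hD⟩
      · rintro ⟨⟨h, _⟩, hD⟩
        exact ⟨h, hD⟩
    have h2 : ((H.deleteEdges {e}).edgeSet ∩ D).ncard = n := by
      have : (H.deleteEdges {e}).edgeSet ∩ D = (H.edgeSet ∩ D) \ {e} := by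
        rw [edgeSet_deleteEdges]
        ext x
        simp only [Set.mem_inter_iff, Set.mem_diff, Set.mem_singleton_iff]
        tauto
      have hmem : e ∈ H.edgeSet ∩ D := Set.mem_inter heH heD
      rw [this, Set.ncard_diff_singleton_of_mem hmem, hn]
      omega
    calc Nat.card (H.deleteEdges D).ConnectedComponent
        = Nat.card ((H.deleteEdges {e}).deleteEdges D).ConnectedComponent := by rw [h1]
      _ ≤ Nat.card (H.deleteEdges {e}).ConnectedComponent + n := ih _ h2
      _ ≤ (Nat.card H.ConnectedComponent + 1) + n :=
          Nat.add_le_add_right (comp_delete_one H e) n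
      _ = Nat.card H.ConnectedComponent + (n + 1) := by omega

/-- Binary edge weights: with G0 the subgraph of weight-0 edges, k the number
of components of (V_0, E_0), and M a maximum matching of the induced subgraph
on V_1 = V \ V_0, every forest cover of G has weighted index at least k + |M|.
(The weighted index of a forest cover (S, F) is the number of weight-1 edges of
F plus the number of connected components of F on S.) -/
theorem stmt_3 {V : Type} [Fintype V] (G : SimpleGraph V) (w : Sym2 V → ℕ)
    (hw : ∀ e, w e = 0 ∨ w e = 1)
    (G0 : SimpleGraph V) (hG0 : ∀ u v, G0.Adj u v ↔ (G.Adj u v ∧ w s(u, v) = 0))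
    (k : ℕ) (hk : k = Nat.card (G0.induce G0.support).ConnectedComponent)
    (M : G.Subgraph) (hMmatch : M.IsMatching)
    (hMV1 : ∀ v ∈ M.verts, v ∉ G0.support)
    (hMmax : ∀ M' : G.Subgraph, M'.IsMatching → (∀ v ∈ M'.verts, v ∉ G0.support) →
      Nat.card M'.edgeSet ≤ Nat.card M.edgeSet) :
    ∀ (S : Finset V) (F : SimpleGraph V),
      F ≤ G → F.IsAcyclic →
      (∀ u v, F.Adj u v → u ∈ S ∧ v ∈ S) →
      (∀ u v, G.Adj u v → u ∈ S ∨ v ∈ S) →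
      k + Nat.card M.edgeSet ≤
        Nat.card {e : Sym2 V // e ∈ F.edgeSet ∧ w e = 1} +
          Nat.card (F.induce (↑S : Set V)).ConnectedComponent := by
  classical
  intro S F hFG hFac hFS hcov
  set W := (↑S : Set V)
  set H : SimpleGraph W := F.induce W with hH
  set D : Set (Sym2 W) := {e | w (Sym2.map Subtype.val e) = 1} with hD
  set H' : SimpleGraph W := H.deleteEdges D with hH'
  -- chosen covering vertices for the matching edges
  have hMex : ∀ e : M.edgeSet, ∃ x y : V,
      x ∈ S ∧ x ∉ G0.support ∧ M.Adj x y ∧ (e : Sym2 V) = s(x, y) := by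
    rintro ⟨e, he⟩
    induction e using Sym2.ind with
    | _ a b =>
      rw [SimpleGraph.Subgraph.mem_edgeSet] at he
      have hG : G.Adj a b := M.adj_sub he
      rcases hcov a b hG with ha | hb
      · exact ⟨a, b, ha, hMV1 a (M.edge_vert he), he, rfl⟩
      · exact ⟨b, a, hb, hMV1 b (M.edge_vert he.symm), he.symm, Sym2.eq_swap⟩
  choose fx fy hfS hfns hfadj hfe using hMex
  have hfinj : Function.Injective fx := by
    intro e1 e2 h
    have hu := hMmatch (M.edge_vert (hfadj e1))
    have : fy e1 = fy e2 := hu.unique (hfadj e1) (h ▸ hfadj e2)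
    have : (e1 : Sym2 V) = (e2 : Sym2 V) := by rw [hfe e1, hfe e2, h, this]
    exact Subtype.ext this
  -- chosen covering vertices for the components of G0 on its support
  have hCex : ∀ c : (G0.induce G0.support).ConnectedComponent,
      ∃ x : V, ∃ hx : x ∈ G0.support, x ∈ S ∧
        (G0.induce G0.support).connectedComponentMk ⟨x, hx⟩ = c := by
    intro c
    obtain ⟨⟨a, ha⟩, rfl⟩ := c.exists_rep
    obtain ⟨b, hab⟩ := (SimpleGraph.mem_support G0).mp ha
    have hGab : G.Adj a b := ((hG0 a b).mp hab).1
    rcases hcov a b hGab with haS | hbS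
    · exact ⟨a, ha, haS, rfl⟩
    · have hb : b ∈ G0.support := (SimpleGraph.mem_support G0).mpr ⟨a, hab.symm⟩
      refine ⟨b, hb, hbS, ?_⟩
      apply SimpleGraph.ConnectedComponent.connectedComponentMk_eq_of_adj
      simp only [comap_adj, Function.Embedding.coe_subtype]
      exact hab.symm
  choose gx hgsupp hgS hgmk using hCex
  -- the invariant map ζ, constant on components of H'
  set ζ : W → ((G0.induce G0.support).ConnectedComponent ⊕ W) := fun x =>
    if h : (x : V) ∈ G0.support
    then Sum.inl ((G0.induce G0.support).connectedComponentMk ⟨(x : V), h⟩)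
    else Sum.inr x with hζ
  have hζadj : ∀ a b : W, H'.Adj a b → ζ a = ζ b := by
    intro a b hab
    rw [hH', deleteEdges_adj] at hab
    obtain ⟨habH, habD⟩ := hab
    have hFab : F.Adj (a : V) (b : V) := by
      exact habH
    have hw0 : w s((a : V), (b : V)) = 0 := by
      rcases hw s((a : V), (b : V)) with h0 | h1
      · exact h0
      · exact absurd (by rwa [hD, Set.mem_setOf_eq, Sym2.map_pair_eq]) habD
    have hG0ab : G0.Adj (a : V) (b : V) := (hG0 _ _).mpr ⟨hFG hFab, hw0⟩
    have ha : (a : V) ∈ G0.support := (SimpleGraph.mem_support G0).mpr ⟨b, hG0ab⟩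
    have hb : (b : V) ∈ G0.support := (SimpleGraph.mem_support G0).mpr ⟨a, hG0ab.symm⟩
    rw [hζ]
    simp only [dif_pos ha, dif_pos hb, Sum.inl.injEq]
    apply SimpleGraph.ConnectedComponent.connectedComponentMk_eq_of_adj
    simp only [comap_adj, Function.Embedding.coe_subtype]
    exact hG0ab
  have hζreach : ∀ a b : W, H'.Reachable a b → ζ a = ζ b := by
    intro a b ⟨p⟩
    induction p with
    | nil => rfl
    | cons h p ih => exact (hζadj _ _ h).trans ih
  -- the injection into components of H'
  set ι : ((G0.induce G0.support).ConnectedComponent ⊕ M.edgeSet) → H'.ConnectedComponent :=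
    Sum.elim (fun c => H'.connectedComponentMk ⟨gx c, hgS c⟩)
      (fun e => H'.connectedComponentMk ⟨fx e, hfS e⟩) with hι
  have hζg : ∀ c, ζ ⟨gx c, hgS c⟩ = Sum.inl c := by
    intro c
    rw [hζ]
    simp only [dif_pos (hgsupp c)]
    rw [hgmk c]
  have hζf : ∀ e, ζ ⟨fx e, hfS e⟩ = Sum.inr ⟨fx e, hfS e⟩ := by
    intro e
    rw [hζ]
    simp only [dif_neg (hfns e)]
  have hιinj : Function.Injective ι := by
    rintro (c1 | e1) (c2 | e2) h <;>
      simp only [hι, Sum.elim_inl, Sum.elim_inr] at h <;>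
      have hr := hζreach _ _ (ConnectedComponent.exact h)
    · rw [hζg c1, hζg c2] at hr
      simpa using hr
    · rw [hζg c1, hζf e2] at hr
      simp at hr
    · rw [hζf e1, hζg c2] at hr
      simp at hr
    · rw [hζf e1, hζf e2] at hr
      simp only [Sum.inr.injEq, Subtype.mk.injEq] at hr
      congr 1
      exact hfinj hr
  -- count: k + |M| ≤ components of H'
  have step1 : k + Nat.card M.edgeSet ≤ Nat.card H'.ConnectedComponent := by
    calc k + Nat.card M.edgeSet
        = Nat.card ((G0.induce G0.support).ConnectedComponent ⊕ M.edgeSet) := by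
          rw [Nat.card_sum, hk]
      _ ≤ Nat.card H'.ConnectedComponent := Nat.card_le_card_of_injective ι hιinj
  -- components of H' ≤ components of H + number of weight-1 edges
  have step2 : Nat.card H'.ConnectedComponent ≤
      Nat.card H.ConnectedComponent + (H.edgeSet ∩ D).ncard :=
    comp_deleteEdges_le H D
  have step3 : (H.edgeSet ∩ D).ncard ≤ Nat.card {e : Sym2 V // e ∈ F.edgeSet ∧ w e = 1} := by
    rw [← Nat.card_coe_set_eq]
    have hmap : ∀ e : (H.edgeSet ∩ D : Set (Sym2 W)),
        Sym2.map Subtype.val (e : Sym2 W) ∈ F.edgeSet ∧ w (Sym2.map Subtype.val (e : Sym2 W)) = 1 := by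
      rintro ⟨e, heH, heD⟩
      refine ⟨?_, heD⟩
      induction e using Sym2.ind with
      | _ a b =>
        rw [SimpleGraph.mem_edgeSet] at heH
        rw [Sym2.map_pair_eq, SimpleGraph.mem_edgeSet]
        exact heH
    refine Nat.card_le_card_of_injective
      (fun e => ⟨Sym2.map Subtype.val (e : Sym2 W), hmap e⟩) ?_
    intro e1 e2 h
    simp only [Subtype.mk.injEq] at h
    exact Subtype.ext (Sym2.map.injective Subtype.val_injective h)
  calc k + Nat.card M.edgeSet ≤ Nat.card H'.ConnectedComponent := step1
    _ ≤ Nat.card H.ConnectedComponent + (H.edgeSet ∩ D).ncard := step2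
    _ ≤ Nat.card H.ConnectedComponent + Nat.card {e : Sym2 V // e ∈ F.edgeSet ∧ w e = 1} :=
        Nat.add_le_add_left step3 _
    _ = Nat.card {e : Sym2 V // e ∈ F.edgeSet ∧ w e = 1} +
          Nat.card (F.induce (↑S : Set V)).ConnectedComponent := by
        rw [Nat.add_comm, hH]
end

section
/- Let G = (V,E) be a graph with edge weights in {0,1}. Define V_0, E_0, V_1, G_1, k and maximum matching M as follows: E_0 is the weight-0 edges, V_0 the vertices incident to E_0, k the number of connected components of (V_0, E_0), V_1 = V \ V_0, G_1 the induced subgraph on V_1, M a maximum matching of G_1. Then the forest consisting of a spanning tree of each component of (V_0, E_0) together with the edges of M is a forest cover of G with weighted index k + 2|M|. -/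
open SimpleGraph

private lemma aux_walk_edges {V : Type} {A B : SimpleGraph V}
    (hd : Disjoint A.support B.support) {u v : V} (q : (A ⊔ B).Walk u v) :
    (∀ e ∈ q.edges, e ∈ A.edgeSet) ∨ (∀ e ∈ q.edges, e ∈ B.edgeSet) := by
  induction q with
  | nil => left; simp
  | @cons a b c h q ih =>
    cases q with
    | nil =>
      rcases h with hA | hB
      · left; intro e he; simp at he; subst he; exact hA
      · right; intro e he; simp at he; subst he; exact hB
    | @cons b d c h' q'' =>
      rcases h with hA | hB
      · have hbA : b ∈ A.support := ⟨a, hA.symm⟩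
        rcases ih with hall | hall
        · left
          intro e he
          rw [Walk.edges_cons] at he
          rcases List.mem_cons.1 he with rfl | he
          · exact (mem_edgeSet _).2 hA
          · exact hall e he
        · exfalso
          have : s(b, d) ∈ B.edgeSet := hall _ (by simp [Walk.edges_cons])
          exact Set.disjoint_left.mp hd hbA ⟨d, (mem_edgeSet _).1 this⟩
      · have hbB : b ∈ B.support := ⟨a, hB.symm⟩
        rcases ih with hall | hall
        · exfalso
          have : s(b, d) ∈ A.edgeSet := hall _ (by simp [Walk.edges_cons])
          exact Set.disjoint_left.mp hd ⟨d, (mem_edgeSet _).1 this⟩ hbB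
        · right
          intro e he
          rw [Walk.edges_cons] at he
          rcases List.mem_cons.1 he with rfl | he
          · exact (mem_edgeSet _).2 hB
          · exact hall e he

private lemma aux_sup_acyclic {V : Type} {A B : SimpleGraph V}
    (hA : A.IsAcyclic) (hB : B.IsAcyclic) (hd : Disjoint A.support B.support) :
    (A ⊔ B).IsAcyclic := by
  intro v p hp
  rcases aux_walk_edges hd p with hall | hall
  · exact hA (p.transfer A hall) (hp.transfer hall)
  · exact hB (p.transfer B hall) (hp.transfer hall)

private lemma aux_matching_acyclic {V : Type} {G : SimpleGraph V} {M : G.Subgraph}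
    (hM : M.IsMatching) : M.spanningCoe.IsAcyclic := by
  intro v p hp
  cases p with
  | nil => exact hp.ne_nil rfl
  | @cons v b v h q =>
    cases q with
    | nil => exact M.spanningCoe.loopless.irrefl _ h
    | @cons b c v h' q' =>
      have h1 : M.Adj b v := h.symm
      have h2 : M.Adj b c := h'
      obtain ⟨w', hw', huniq⟩ := hM (M.edge_vert h1)
      have hvc : v = c := (huniq v h1).trans (huniq c h2).symm
      subst hvc
      cases q' with
      | nil => simpa using hp.three_le_length
      | @cons v d v h'' q'' =>
        have hnd := hp.support_nodup
        simp only [Walk.support_cons, List.tail_cons, List.nodup_cons] at hnd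
        exact hnd.2.1 q''.end_mem_support

/-- Binary edge weights: the forest consisting of a spanning tree T of each
component of (V_0, E_0) together with the edges of a maximum matching M of the
induced subgraph on V_1 is a forest cover of G with weighted index k + 2|M|. -/
theorem stmt_4 {V : Type} [Fintype V] (G : SimpleGraph V) (w : Sym2 V → ℕ)
    (hw : ∀ e, w e = 0 ∨ w e = 1)
    (G0 : SimpleGraph V) (hG0 : ∀ u v, G0.Adj u v ↔ (G.Adj u v ∧ w s(u, v) = 0))
    (k : ℕ) (hk : k = Nat.card (G0.induce G0.support).ConnectedComponent)
    -- T is a spanning tree of each component of (V_0, E_0):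
    (T : SimpleGraph V) (hTle : T ≤ G0) (hTacyc : T.IsAcyclic)
    (hTsupp : T.support = G0.support)
    (hTreach : ∀ u v, G0.Reachable u v ↔ T.Reachable u v)
    -- M is a maximum matching of the induced subgraph on V_1 = V \ V_0:
    (M : G.Subgraph) (hMmatch : M.IsMatching)
    (hMV1 : ∀ v ∈ M.verts, v ∉ G0.support)
    (hMmax : ∀ M' : G.Subgraph, M'.IsMatching → (∀ v ∈ M'.verts, v ∉ G0.support) →
      Nat.card M'.edgeSet ≤ Nat.card M.edgeSet) :
    -- the forest F = T ⊔ M with vertex set S = V_0 ∪ verts(M) is a forest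
    -- cover of G with weighted index k + 2|M|:
    (T ⊔ M.spanningCoe) ≤ G ∧ (T ⊔ M.spanningCoe).IsAcyclic ∧
    (∀ u v, (T ⊔ M.spanningCoe).Adj u v →
      u ∈ G0.support ∪ M.verts ∧ v ∈ G0.support ∪ M.verts) ∧
    (∀ u v, G.Adj u v → u ∈ G0.support ∪ M.verts ∨ v ∈ G0.support ∪ M.verts) ∧
    Nat.card {e : Sym2 V // e ∈ (T ⊔ M.spanningCoe).edgeSet ∧ w e = 1} +
        Nat.card ((T ⊔ M.spanningCoe).induce (G0.support ∪ M.verts)).ConnectedComponent =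
      k + 2 * Nat.card M.edgeSet := by
  classical
  set F : SimpleGraph V := T ⊔ M.spanningCoe with hF
  set S : Set V := G0.support ∪ M.verts with hS
  have hG0G : G0 ≤ G := fun {u v} h => ((hG0 u v).1 h).1
  have hTG0supp : ∀ {x y : V}, T.Adj x y → x ∈ G0.support := by
    intro x y h
    rw [← hTsupp]
    exact ⟨y, h⟩
  have hMadj_vert : ∀ {x y : V}, M.Adj x y → x ∈ M.verts := fun h => M.edge_vert h
  have hMnot0 : ∀ {x : V}, x ∈ M.verts → x ∉ G0.support := fun h => hMV1 _ h
  have hFadj : ∀ {u v : V}, F.Adj u v ↔ T.Adj u v ∨ M.Adj u v := by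
    intro u v; rfl
  -- Part 1
  have part1 : F ≤ G := sup_le (le_trans hTle hG0G) M.spanningCoe_le
  -- Part 2
  have hdisj : Disjoint T.support M.spanningCoe.support := by
    rw [Set.disjoint_left]
    intro a ha hb
    obtain ⟨b, hab⟩ := hb
    exact hMnot0 (hMadj_vert hab) (hTsupp ▸ ha)
  have part2 : F.IsAcyclic :=
    aux_sup_acyclic hTacyc (aux_matching_acyclic hMmatch) hdisj
  -- Part 3
  have part3 : ∀ u v, F.Adj u v → u ∈ S ∧ v ∈ S := by
    intro u v h
    rcases hFadj.1 h with h | h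
    · exact ⟨Or.inl (hTG0supp h), Or.inl (hTG0supp h.symm)⟩
    · exact ⟨Or.inr (hMadj_vert h), Or.inr (hMadj_vert h.symm)⟩
  -- Part 4 : vertex cover
  have part4 : ∀ u v, G.Adj u v → u ∈ S ∨ v ∈ S := by
    intro u v hadj
    by_contra hcon
    push_neg at hcon
    obtain ⟨hu, hv⟩ := hcon
    have huG0 : u ∉ G0.support := fun h => hu (Or.inl h)
    have hvG0 : v ∉ G0.support := fun h => hv (Or.inl h)
    have huM : u ∉ M.verts := fun h => hu (Or.inr h)
    have hvM : v ∉ M.verts := fun h => hv (Or.inr h)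
    set M' : G.Subgraph := M ⊔ G.subgraphOfAdj hadj with hM'
    have hdisj' : Disjoint M.support (G.subgraphOfAdj hadj).support := by
      rw [Set.disjoint_left]
      intro a ha hb
      have ha' : a ∈ M.verts := M.support_subset_verts ha
      have hb' : a ∈ ({u, v} : Set V) := (G.subgraphOfAdj hadj).support_subset_verts hb
      rcases hb' with rfl | rfl
      · exact huM ha'
      · exact hvM ha'
    have hmatch' : M'.IsMatching :=
      hMmatch.sup (SimpleGraph.Subgraph.IsMatching.subgraphOfAdj hadj) hdisj'
    have hverts' : ∀ x ∈ M'.verts, x ∉ G0.support := by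
      intro x hx
      rcases hx with hx | hx
      · exact hMnot0 hx
      · rcases hx with rfl | rfl
        · exact huG0
        · exact hvG0
    have hedge : M'.edgeSet = insert s(u, v) M.edgeSet := by
      rw [hM', SimpleGraph.Subgraph.edgeSet_sup, SimpleGraph.edgeSet_subgraphOfAdj,
        Set.union_singleton]
    have hnotmem : s(u, v) ∉ M.edgeSet := fun h => huM (M.edge_vert h)
    have hcard : Nat.card M'.edgeSet = Nat.card M.edgeSet + 1 := by
      rw [Nat.card_coe_set_eq, Nat.card_coe_set_eq, hedge,
        Set.ncard_insert_of_notMem hnotmem M.edgeSet.toFinite]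
    have := hMmax M' hmatch' hverts'
    omega
  refine ⟨part1, part2, part3, part4, ?_⟩
  -- Part 5 : counting
  -- (a) weight-1 edges of F are exactly the edges of M
  have ha : Nat.card {e : Sym2 V // e ∈ F.edgeSet ∧ w e = 1} = Nat.card M.edgeSet := by
    apply Nat.card_congr
    apply Equiv.subtypeEquivRight
    intro e
    induction e with
    | h u v =>
      constructor
      · rintro ⟨he, hwe⟩
        rcases hFadj.1 ((SimpleGraph.mem_edgeSet _).1 he) with h | h
        · exact absurd ((hG0 u v).1 (hTle h)).2 (by omega)
        · exact h
      · intro h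
        refine ⟨(SimpleGraph.mem_edgeSet _).2 (hFadj.2 (Or.inr h)), ?_⟩
        rcases hw s(u, v) with h0 | h1
        · exact absurd ⟨v, (hG0 u v).2 ⟨M.adj_sub h, h0⟩⟩ (hMnot0 (hMadj_vert h))
        · exact h1
  -- (b) components of the induced forest
  have hmem : ∀ x : S, x.1 ∉ G0.support → x.1 ∈ M.verts := by
    intro x hx
    rcases x.2 with h | h
    · exact absurd h hx
    · exact h
  have hb : Nat.card ((F.induce S)).ConnectedComponent =
      Nat.card (G0.induce G0.support).ConnectedComponent + Nat.card M.edgeSet := by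
    let f : S → (G0.induce G0.support).ConnectedComponent ⊕ M.edgeSet := fun x =>
      if hx : x.1 ∈ G0.support then
        Sum.inl ((G0.induce G0.support).connectedComponentMk ⟨x.1, hx⟩)
      else Sum.inr (hMmatch.toEdge ⟨x.1, hmem x hx⟩)
    have hconst : ∀ a b : S, (F.induce S).Adj a b → f a = f b := by
      intro a b hab
      have hab' : F.Adj a.1 b.1 := hab
      rcases hFadj.1 hab' with h | h
      · have ha0 := hTG0supp h
        have hb0 := hTG0supp h.symm
        simp only [f, dif_pos ha0, dif_pos hb0]
        refine congrArg Sum.inl (SimpleGraph.ConnectedComponent.sound ?_)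
        exact SimpleGraph.Adj.reachable (by exact hTle h)
      · have haM := hMadj_vert h
        have hbM := hMadj_vert h.symm
        simp only [f, dif_neg (hMnot0 haM), dif_neg (hMnot0 hbM)]
        exact congrArg Sum.inr (hMmatch.toEdge_eq_toEdge_of_adj h)
    have hwalk : ∀ {a b : S} (p : (F.induce S).Walk a b), f a = f b := by
      intro a b p
      induction p with
      | nil => rfl
      | cons h p ih => exact (hconst _ _ h).trans ih
    let fbar : (F.induce S).ConnectedComponent →
        (G0.induce G0.support).ConnectedComponent ⊕ M.edgeSet :=
      SimpleGraph.ConnectedComponent.lift f (fun a b p _ => hwalk p)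
    have hTwalk : ∀ {x y : V} (p : T.Walk x y) (hx : x ∈ S) (hy : y ∈ S),
        (F.induce S).Reachable ⟨x, hx⟩ ⟨y, hy⟩ := by
      intro x y p
      induction p with
      | nil => exact fun hx hy => SimpleGraph.Reachable.refl _
      | @cons x b y h p ih =>
        intro hx hy
        have hb : b ∈ S := Or.inl (hTG0supp h.symm)
        have hadj : (F.induce S).Adj ⟨x, hx⟩ ⟨b, hb⟩ := by
          show F.Adj x b
          exact hFadj.2 (Or.inl h)
        exact hadj.reachable.trans (ih hb hy)
    have hsurj : Function.Surjective fbar := by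
      rintro (c | e)
      · induction c using SimpleGraph.ConnectedComponent.ind with
        | _ v =>
          refine ⟨(F.induce S).connectedComponentMk ⟨v.1, Or.inl v.2⟩, ?_⟩
          show f _ = _
          simp only [f, dif_pos v.2]
      · obtain ⟨e', he'⟩ := e
        revert he'
        induction e' using Sym2.ind with
        | _ u v =>
          intro he'
          have hadj : M.Adj u v := he'
          have huv : u ∈ M.verts := M.edge_vert hadj
          refine ⟨(F.induce S).connectedComponentMk ⟨u, Or.inr huv⟩, ?_⟩
          show f _ = _
          simp only [f, dif_neg (hMnot0 huv)]
          exact congrArg Sum.inr (hMmatch.toEdge_eq_of_adj hadj)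
    have hinj : Function.Injective fbar := by
      have key : ∀ a b : S, f a = f b → (F.induce S).Reachable a b := by
        intro a b hfab
        by_cases haG : a.1 ∈ G0.support <;> by_cases hbG : b.1 ∈ G0.support
        · simp only [f, dif_pos haG, dif_pos hbG] at hfab
          have hre : (G0.induce G0.support).Reachable ⟨a.1, haG⟩ ⟨b.1, hbG⟩ :=
            SimpleGraph.ConnectedComponent.exact (Sum.inl.inj hfab)
          have hre2 : G0.Reachable a.1 b.1 :=
            hre.map (SimpleGraph.Embedding.induce G0.support).toHom
          obtain ⟨p⟩ := (hTreach _ _).1 hre2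
          have := hTwalk p a.2 b.2
          simpa using this
        · simp only [f, dif_pos haG, dif_neg hbG] at hfab
          exact absurd hfab (by simp)
        · simp only [f, dif_neg haG, dif_pos hbG] at hfab
          exact absurd hfab (by simp)
        · have haM := hmem a haG
          have hbM := hmem b hbG
          simp only [f, dif_neg haG, dif_neg hbG] at hfab
          have h1 := Sum.inr.inj hfab
          obtain ⟨pa, hpa, _⟩ := hMmatch haM
          obtain ⟨pb, hpb, _⟩ := hMmatch hbM
          rw [hMmatch.toEdge_eq_of_adj hpa, hMmatch.toEdge_eq_of_adj hpb] at h1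
          have h2 : s(a.1, pa) = s(b.1, pb) := congrArg Subtype.val h1
          rw [Sym2.eq_iff] at h2
          rcases h2 with ⟨h3, _⟩ | ⟨h3, h4⟩
          · have : a = b := Subtype.ext h3
            rw [this]
          · have hadj : M.Adj a.1 b.1 := h4 ▸ hpa
            have hadj' : (F.induce S).Adj a b := by
              show F.Adj a.1 b.1
              exact hFadj.2 (Or.inr hadj)
            exact hadj'.reachable
      intro c d hcd
      induction c using SimpleGraph.ConnectedComponent.ind with
      | _ a =>
        induction d using SimpleGraph.ConnectedComponent.ind with
        | _ b => exact SimpleGraph.ConnectedComponent.sound (key a b hcd)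
    have := Nat.card_congr (Equiv.ofBijective fbar ⟨hinj, hsurj⟩)
    rw [this, Nat.card_sum]
  rw [ha, hb, ← hk]
  ring
end

section
/- For a graph with binary edge weights, the forest cover constructed from spanning trees of the weight-0 components plus a maximum matching on the remaining vertices has weighted index at most twice the minimum weighted index of any forest cover. -/
open SimpleGraph

variable {W : Type*}


noncomputable def SG_D (H : SimpleGraph W) (v : W) : ℕ :=
  H.dist v (H.connectedComponentMk v).out

lemma SG_rep_reachable (H : SimpleGraph W) (v : W) :
    H.Reachable v (H.connectedComponentMk v).out := by
  have : H.connectedComponentMk (H.connectedComponentMk v).out = H.connectedComponentMk v :=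
    (H.connectedComponentMk v).out_eq
  exact (SimpleGraph.ConnectedComponent.exact this).symm

lemma SG_rep_eq_of_adj (H : SimpleGraph W) {u v : W} (h : H.Adj u v) :
    (H.connectedComponentMk u).out = (H.connectedComponentMk v).out := by
  rw [SimpleGraph.ConnectedComponent.sound h.reachable]

/-- a shortest path, as a path, avoiding a farther vertex -/
lemma SG_shortest (H : SimpleGraph W) {y r : W} (h : H.Reachable y r) :
    ∃ p : H.Walk y r, p.IsPath ∧ p.length = H.dist y r := by
  classical
  obtain ⟨p, hp⟩ := h.exists_walk_length_eq_dist
  exact ⟨p.bypass, p.bypass_isPath,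
    le_antisymm (hp ▸ p.length_bypass_le) (H.dist_le p.bypass)⟩

lemma SG_down_unique {H : SimpleGraph W} (hH : H.IsAcyclic) {r x y z : W}
    (hy : H.Adj x y) (hz : H.Adj x z)
    (hyr : H.Reachable y r) (hzr : H.Reachable z r)
    (hdy : H.dist y r < H.dist x r) (hdz : H.dist z r < H.dist x r) : y = z := by
  classical
  obtain ⟨p, hp, hpl⟩ := SG_shortest H hyr
  obtain ⟨q, hq, hql⟩ := SG_shortest H hzr
  have hxp : x ∉ p.support := by
    intro hx
    have h1 : H.dist x r ≤ (p.dropUntil x hx).length := H.dist_le _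
    have h2 : (p.takeUntil x hx).length + (p.dropUntil x hx).length = p.length := by
      have := congrArg SimpleGraph.Walk.length (p.take_spec hx)
      rwa [SimpleGraph.Walk.length_append] at this
    omega
  have hxq : x ∉ q.support := by
    intro hx
    have h1 : H.dist x r ≤ (q.dropUntil x hx).length := H.dist_le _
    have h2 : (q.takeUntil x hx).length + (q.dropUntil x hx).length = q.length := by
      have := congrArg SimpleGraph.Walk.length (q.take_spec hx)
      rwa [SimpleGraph.Walk.length_append] at this
    omega
  have hPy : (SimpleGraph.Walk.cons hy p).IsPath :=
    (SimpleGraph.Walk.cons_isPath_iff hy p).2 ⟨hp, hxp⟩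
  have hPz : (SimpleGraph.Walk.cons hz q).IsPath :=
    (SimpleGraph.Walk.cons_isPath_iff hz q).2 ⟨hq, hxq⟩
  have := hH.path_unique ⟨SimpleGraph.Walk.cons hy p, hPy⟩ ⟨SimpleGraph.Walk.cons hz q, hPz⟩
  have hw : SimpleGraph.Walk.cons hy p = SimpleGraph.Walk.cons hz q := Subtype.ext_iff.mp this
  have hs := congrArg SimpleGraph.Walk.support hw
  rw [SimpleGraph.Walk.support_cons, SimpleGraph.Walk.support_cons] at hs
  simp only [List.cons.injEq, true_and] at hs
  rw [SimpleGraph.Walk.support_eq_cons p, SimpleGraph.Walk.support_eq_cons q] at hs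
  simp only [List.cons.injEq] at hs
  exact hs.1

lemma SG_adj_dist_ne {H : SimpleGraph W} (hH : H.IsAcyclic) {u v r : W}
    (huv : H.Adj u v) (hur : H.Reachable u r) : H.dist u r ≠ H.dist v r := by
  classical
  intro heq
  have hvr : H.Reachable v r := huv.symm.reachable.trans hur
  obtain ⟨q, hq, hql⟩ := SG_shortest H hvr
  have huq : u ∉ q.support := by
    intro hu
    have h1 : H.dist u r ≤ (q.dropUntil u hu).length := H.dist_le _
    have h2 : (q.takeUntil u hu).length + (q.dropUntil u hu).length = q.length := by
      have := congrArg SimpleGraph.Walk.length (q.take_spec hu)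
      rwa [SimpleGraph.Walk.length_append] at this
    have h3 : (q.takeUntil u hu).length = 0 := by omega
    exact H.irrefl (SimpleGraph.Walk.eq_of_length_eq_zero h3 ▸ huv)
  obtain ⟨p, hp, hpl⟩ := SG_shortest H hur
  have hP : (SimpleGraph.Walk.cons huv q).IsPath :=
    (SimpleGraph.Walk.cons_isPath_iff huv q).2 ⟨hq, huq⟩
  have := hH.path_unique ⟨SimpleGraph.Walk.cons huv q, hP⟩ ⟨p, hp⟩
  have hw : SimpleGraph.Walk.cons huv q = p := Subtype.ext_iff.mp this
  have := congrArg SimpleGraph.Walk.length hw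
  rw [SimpleGraph.Walk.length_cons] at this
  omega

/-- Lemma A : for acyclic graphs, edges + components ≤ vertices -/
lemma SG_card_ge {H : SimpleGraph W} [Finite W] (hH : H.IsAcyclic) :
    Nat.card H.edgeSet + Nat.card H.ConnectedComponent ≤ Nat.card W := by
  classical
  have hedge : ∀ e : H.edgeSet, ∃ x, ∃ y, (e : Sym2 W) = s(x, y) ∧ H.Adj x y ∧
      SG_D H y < SG_D H x := by
    rintro ⟨e, he⟩
    induction e with
    | _ u v =>
      rw [SimpleGraph.mem_edgeSet] at he
      have hrr : (H.connectedComponentMk v).out = (H.connectedComponentMk u).out :=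
        SG_rep_eq_of_adj H he.symm
      have hne : SG_D H u ≠ SG_D H v := by
        unfold SG_D
        rw [hrr]
        exact SG_adj_dist_ne hH he (SG_rep_reachable H u)
      rcases lt_or_gt_of_ne hne with h | h
      · exact ⟨v, u, Sym2.eq_swap, he.symm, h⟩
      · exact ⟨u, v, rfl, he, h⟩
  rw [← Nat.card_sum]
  refine Nat.card_le_card_of_injective
    (f := Sum.elim (fun e : H.edgeSet => Classical.choose (hedge e))
      (fun c : H.ConnectedComponent => c.out)) ?_
  have hD_out : ∀ c : H.ConnectedComponent, SG_D H c.out = 0 := by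
    intro c
    have h1 : H.connectedComponentMk c.out = c := c.out_eq
    unfold SG_D
    rw [h1]
    exact SimpleGraph.dist_self
  rintro (e1 | c1) (e2 | c2) hab <;> simp only [Sum.elim_inl, Sum.elim_inr] at hab
  · obtain ⟨y1, he1, ha1, hd1⟩ := Classical.choose_spec (hedge e1)
    obtain ⟨y2, he2, ha2, hd2⟩ := Classical.choose_spec (hedge e2)
    set x := Classical.choose (hedge e1) with hx
    rw [← hab] at he2 ha2 hd2
    have hr1 : (H.connectedComponentMk y1).out = (H.connectedComponentMk x).out :=
      SG_rep_eq_of_adj H ha1.symm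
    have hr2 : (H.connectedComponentMk y2).out = (H.connectedComponentMk x).out :=
      SG_rep_eq_of_adj H ha2.symm
    have hyz : y1 = y2 := by
      refine SG_down_unique hH (r := (H.connectedComponentMk x).out) ha1 ha2
        (hr1 ▸ SG_rep_reachable H y1) (hr2 ▸ SG_rep_reachable H y2) ?_ ?_
      · have := hd1; unfold SG_D at this; rwa [hr1] at this
      · have := hd2; unfold SG_D at this; rwa [hr2] at this
    exact congrArg Sum.inl (Subtype.ext (by rw [he1, he2, hyz]))
  · exfalso
    obtain ⟨y1, he1, ha1, hd1⟩ := Classical.choose_spec (hedge e1)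
    rw [hab] at hd1
    rw [hD_out c2] at hd1
    omega
  · exfalso
    obtain ⟨y2, he2, ha2, hd2⟩ := Classical.choose_spec (hedge e2)
    rw [← hab] at hd2
    rw [hD_out c1] at hd2
    omega
  · have hc1 : H.connectedComponentMk c1.out = c1 := c1.out_eq
    have hc2 : H.connectedComponentMk c2.out = c2 := c2.out_eq
    have h := congrArg H.connectedComponentMk hab
    rw [hc1, hc2] at h
    rw [h]

lemma SG_exists_down (H : SimpleGraph W) {v : W}
    (hv : v ≠ (H.connectedComponentMk v).out) :
    ∃ x, H.Adj v x ∧ SG_D H x < SG_D H v := by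
  have hreach := SG_rep_reachable H v
  have hpos : 0 < SG_D H v := hreach.pos_dist_of_ne hv
  obtain ⟨p, hp⟩ := hreach.exists_walk_length_eq_dist
  obtain ⟨x, h, q, rfl⟩ := SimpleGraph.Walk.exists_eq_cons_of_ne hv p
  refine ⟨x, h, ?_⟩
  have hrep : (H.connectedComponentMk x).out = (H.connectedComponentMk v).out :=
    SG_rep_eq_of_adj H h.symm
  have hle : H.dist x (H.connectedComponentMk v).out ≤ q.length := SimpleGraph.dist_le q
  simp only [SimpleGraph.Walk.length_cons] at hp
  unfold SG_D at hpos ⊢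
  rw [hrep]
  omega

/-- Lemma B : vertices ≤ edges + components -/
lemma SG_card_le (H : SimpleGraph W) [Finite W] :
    Nat.card W ≤ Nat.card H.edgeSet + Nat.card H.ConnectedComponent := by
  classical
  rw [← Nat.card_sum]
  have hf : ∀ v : W, v ≠ (H.connectedComponentMk v).out →
      ∃ x, H.Adj v x ∧ SG_D H x < SG_D H v := fun v hv => SG_exists_down H hv
  refine Nat.card_le_card_of_injective
    (f := fun v : W =>
      if hv : v = (H.connectedComponentMk v).out then
        Sum.inr (H.connectedComponentMk v)
      else
        Sum.inl ⟨s(v, Classical.choose (hf v hv)),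
          (Classical.choose_spec (hf v hv)).1⟩) ?_
  intro a b hab
  dsimp only at hab
  by_cases ha : a = (H.connectedComponentMk a).out <;>
    by_cases hb : b = (H.connectedComponentMk b).out
  · rw [dif_pos ha, dif_pos hb] at hab
    simp only [Sum.inr.injEq] at hab
    rw [ha, hb, hab]
  · rw [dif_pos ha, dif_neg hb] at hab; exact absurd hab (by simp)
  · rw [dif_neg ha, dif_pos hb] at hab; exact absurd hab (by simp)
  · rw [dif_neg ha, dif_neg hb] at hab
    simp only [Sum.inl.injEq, Subtype.mk.injEq, Sym2.eq_iff] at hab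
    rcases Sym2.eq_iff.mp (congrArg Subtype.val hab) with ⟨hab1, _⟩ | ⟨h1, h2⟩
    · exact hab1
    · exfalso
      have hda := (Classical.choose_spec (hf a ha)).2
      have hdb := (Classical.choose_spec (hf b hb)).2
      rw [h2] at hda; rw [← h1] at hdb
      exact lt_asymm hda hdb


lemma SG_acyclic_induce {F H : SimpleGraph W} (hF : F.IsAcyclic) (hHF : H ≤ F) (A : Set W) :
    (H.induce A).IsAcyclic := by
  intro v c hc
  let φ : H.induce A →g F := ⟨Subtype.val, fun h => hHF (by simpa using h)⟩
  exact hF (c.map φ) ((SimpleGraph.Walk.map_isCycle_iff_of_injective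
    (f := φ) Subtype.val_injective).mpr hc)

lemma SG_card_induce_edgeSet (H : SimpleGraph W) (s : Set W)
    (hs : ∀ u v, H.Adj u v → u ∈ s ∧ v ∈ s) :
    Nat.card (H.induce s).edgeSet = Nat.card H.edgeSet := by
  have hmem : ∀ e : Sym2 s, e ∈ (H.induce s).edgeSet → Sym2.map Subtype.val e ∈ H.edgeSet := by
    intro e
    induction e with
    | _ a b =>
      intro he
      rw [SimpleGraph.mem_edgeSet] at he
      rw [Sym2.map_pair_eq, SimpleGraph.mem_edgeSet]
      simpa using he
  refine Nat.card_eq_of_bijective (fun e => ⟨Sym2.map Subtype.val e.1, hmem e.1 e.2⟩) ⟨?_, ?_⟩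
  · intro e1 e2 h
    exact Subtype.ext (Sym2.map.injective Subtype.val_injective
      (congrArg Subtype.val h))
  · rintro ⟨e, he⟩
    revert he
    induction e with
    | _ u v =>
      intro he
      rw [SimpleGraph.mem_edgeSet] at he
      obtain ⟨hu, hv⟩ := hs u v he
      refine ⟨⟨s(⟨u, hu⟩, ⟨v, hv⟩), ?_⟩, ?_⟩
      · rw [SimpleGraph.mem_edgeSet]; simpa using he
      · apply Subtype.ext; simp [Sym2.map_pair_eq]


/-- Binary edge weights: the forest cover constructed from spanning trees of
the weight-0 components plus a maximum matching on the remaining vertices has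
weighted index k + 2|M|, which is at most twice the weighted index of any
forest cover of G. -/
theorem stmt_5 {V : Type} [Fintype V] (G : SimpleGraph V) (w : Sym2 V → ℕ)
    (hw : ∀ e, w e = 0 ∨ w e = 1)
    (G0 : SimpleGraph V) (hG0 : ∀ u v, G0.Adj u v ↔ (G.Adj u v ∧ w s(u, v) = 0))
    (k : ℕ) (hk : k = Nat.card (G0.induce G0.support).ConnectedComponent)
    (M : G.Subgraph) (hMmatch : M.IsMatching)
    (hMV1 : ∀ v ∈ M.verts, v ∉ G0.support)
    (hMmax : ∀ M' : G.Subgraph, M'.IsMatching → (∀ v ∈ M'.verts, v ∉ G0.support) →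
      Nat.card M'.edgeSet ≤ Nat.card M.edgeSet) :
    ∀ (S : Finset V) (F : SimpleGraph V),
      F ≤ G → F.IsAcyclic →
      (∀ u v, F.Adj u v → u ∈ S ∧ v ∈ S) →
      (∀ u v, G.Adj u v → u ∈ S ∨ v ∈ S) →
      k + 2 * Nat.card M.edgeSet ≤
        2 * (Nat.card {e : Sym2 V // e ∈ F.edgeSet ∧ w e = 1} +
          Nat.card (F.induce (↑S : Set V)).ConnectedComponent) := by
  classical
  intro S F hFG hFac hFS hcov
  set V0 := G0.support with hV0
  set A : Set V := (↑S : Set V) ∩ V0 with hA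
  set F0 : SimpleGraph V := G0 ⊓ F with hF0def
  set f0 := Nat.card {e : Sym2 V // e ∈ F.edgeSet ∧ w e = 0} with hf0
  set f1 := Nat.card {e : Sym2 V // e ∈ F.edgeSet ∧ w e = 1} with hf1
  -- F0 edge set
  have hE0 : F0.edgeSet = {e : Sym2 V | e ∈ F.edgeSet ∧ w e = 0} := by
    ext e
    induction e with
    | _ u v =>
      simp only [SimpleGraph.mem_edgeSet, Set.mem_setOf_eq, hF0def, SimpleGraph.inf_adj, hG0]
      constructor
      · rintro ⟨⟨_, h0⟩, hF⟩; exact ⟨hF, h0⟩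
      · rintro ⟨hF, h0⟩; exact ⟨⟨hFG hF, h0⟩, hF⟩
  -- edge weight partition
  have hsplit : Nat.card F.edgeSet = f0 + f1 := by
    have hU : {e : Sym2 V | e ∈ F.edgeSet ∧ w e = 0} ∪ {e : Sym2 V | e ∈ F.edgeSet ∧ w e = 1}
        = F.edgeSet := by
      ext e
      constructor
      · rintro (⟨h, _⟩ | ⟨h, _⟩) <;> exact h
      · intro h
        rcases hw e with h0 | h1
        · exact Or.inl ⟨h, h0⟩
        · exact Or.inr ⟨h, h1⟩
    have hdisj : Disjoint {e : Sym2 V | e ∈ F.edgeSet ∧ w e = 0}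
        {e : Sym2 V | e ∈ F.edgeSet ∧ w e = 1} := by
      rw [Set.disjoint_left]
      rintro e ⟨_, h0⟩ ⟨_, h1⟩
      omega
    have := Set.ncard_union_eq hdisj (Set.toFinite _) (Set.toFinite _)
    rw [hU] at this
    rw [Nat.card_coe_set_eq, this, hf0, hf1,
      ← Nat.card_coe_set_eq, ← Nat.card_coe_set_eq]
    rfl
  -- step 1 : |S| ≤ edges(F|S) + comps(F|S)
  have h7 := SG_card_le (F.induce (↑S : Set V))
  have h8 : Nat.card (F.induce (↑S : Set V)).edgeSet = Nat.card F.edgeSet :=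
    SG_card_induce_edgeSet F _ (fun u v h =>
      ⟨Finset.mem_coe.mpr (hFS u v h).1, Finset.mem_coe.mpr (hFS u v h).2⟩)
  have hScard : Nat.card ((↑S : Set V) : Set V) = S.card := by
    rw [Nat.card_coe_set_eq, Set.ncard_coe_finset]
  -- step 2 : k ≤ comps(F0|A)
  have hφ : ∃ φ : F0.induce A →g G0.induce V0, Function.Surjective
      (SimpleGraph.ConnectedComponent.map φ) := by
    refine ⟨⟨fun x => ⟨x.1, x.2.2⟩, ?_⟩, ?_⟩
    · rintro ⟨a, ha⟩ ⟨b, hb⟩ hab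
      simp only [SimpleGraph.comap_adj, Function.Embedding.coe_subtype] at hab ⊢
      exact hab.1
    · intro c
      induction c using SimpleGraph.ConnectedComponent.ind with
      | _ x =>
        obtain ⟨v, hv⟩ := x
        obtain ⟨u, hu⟩ := (SimpleGraph.mem_support G0).mp hv
        have hGadj : G.Adj v u := ((hG0 v u).mp hu).1
        rcases hcov v u hGadj with hvS | huS
        · refine ⟨SimpleGraph.connectedComponentMk _ ⟨v, ⟨Finset.mem_coe.mpr hvS, hv⟩⟩, ?_⟩
          rw [SimpleGraph.ConnectedComponent.map_mk]
          rfl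
        · have hu_supp : u ∈ G0.support := (SimpleGraph.mem_support G0).mpr ⟨v, hu.symm⟩
          refine ⟨SimpleGraph.connectedComponentMk _ ⟨u, ⟨Finset.mem_coe.mpr huS, hu_supp⟩⟩, ?_⟩
          rw [SimpleGraph.ConnectedComponent.map_mk]
          apply SimpleGraph.ConnectedComponent.sound
          have : (G0.induce V0).Adj ⟨u, hu_supp⟩ ⟨v, hv⟩ := by
            simp only [SimpleGraph.comap_adj, Function.Embedding.coe_subtype]
            exact hu.symm
          exact this.reachable
  obtain ⟨φ, hφsurj⟩ := hφ
  have hcomp : k ≤ Nat.card (F0.induce A).ConnectedComponent := by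
    rw [hk]
    exact Nat.card_le_card_of_surjective _ hφsurj
  -- step 3 : edges(F0|A) + comps(F0|A) ≤ |A|
  have hF0le : F0 ≤ F := inf_le_right
  have hAedges : ∀ u v, F0.Adj u v → u ∈ A ∧ v ∈ A := by
    intro u v h
    have hg : G0.Adj u v := h.1
    have hf : F.Adj u v := h.2
    exact ⟨⟨Finset.mem_coe.mpr (hFS u v hf).1, (SimpleGraph.mem_support G0).mpr ⟨v, hg⟩⟩,
      ⟨Finset.mem_coe.mpr (hFS u v hf).2, (SimpleGraph.mem_support G0).mpr ⟨u, hg.symm⟩⟩⟩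
  have h9 : Nat.card (F0.induce A).edgeSet = Nat.card F0.edgeSet :=
    SG_card_induce_edgeSet F0 A hAedges
  have h10 : Nat.card F0.edgeSet = f0 := by
    rw [hE0, hf0]
    rfl
  have h11 := SG_card_ge (SG_acyclic_induce hFac hF0le A)
  -- step 4 : matching bound
  have hmb : Nat.card M.edgeSet ≤ Nat.card ((↑S : Set V) \ V0 : Set V) := by
    have hch : ∀ e : M.edgeSet, ∃ x y, (e : Sym2 V) = s(x, y) ∧ M.Adj x y ∧ x ∈ S := by
      rintro ⟨e, he⟩
      revert he
      induction e with
      | _ u v =>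
        intro he
        rw [SimpleGraph.Subgraph.mem_edgeSet] at he
        rcases hcov u v (M.adj_sub he) with h | h
        · exact ⟨u, v, rfl, he, h⟩
        · exact ⟨v, u, Sym2.eq_swap, he.symm, h⟩
    have hmem : ∀ e : M.edgeSet, Classical.choose (hch e) ∈ ((↑S : Set V) \ V0 : Set V) := by
      intro e
      obtain ⟨y, _, hadj, hxS⟩ := Classical.choose_spec (hch e)
      exact ⟨Finset.mem_coe.mpr hxS, fun hsupp => hMV1 _ (M.edge_vert hadj) hsupp⟩
    refine Nat.card_le_card_of_injective (fun e => ⟨Classical.choose (hch e), hmem e⟩) ?_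
    intro e1 e2 h
    simp only [Subtype.mk.injEq] at h
    obtain ⟨y1, he1, ha1, _⟩ := Classical.choose_spec (hch e1)
    obtain ⟨y2, he2, ha2, _⟩ := Classical.choose_spec (hch e2)
    rw [← h] at he2 ha2
    obtain ⟨z, _, huniq⟩ := hMmatch (M.edge_vert ha1)
    have hy : y1 = y2 := by rw [huniq y1 ha1, huniq y2 ha2]
    apply Subtype.ext
    rw [he1, he2, hy]
  -- step 5 : cardinal arithmetic
  have hsum : ((↑S : Set V) ∩ V0).ncard + ((↑S : Set V) \ V0).ncard = S.card := by
    rw [Set.ncard_inter_add_ncard_diff_eq_ncard (↑S : Set V) V0 S.finite_toSet,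
      Set.ncard_coe_finset]
  rw [Nat.card_coe_set_eq] at hScard
  have hAN : Nat.card A = ((↑S : Set V) ∩ V0).ncard := by
    rw [hA, Nat.card_coe_set_eq]
  have hBN : Nat.card ((↑S : Set V) \ V0 : Set V) = ((↑S : Set V) \ V0).ncard :=
    Nat.card_coe_set_eq _
  rw [h8, hsplit] at h7
  rw [h9, h10, hAN] at h11
  rw [hBN] at hmb
  have hS7 : Nat.card ((↑S : Set V) : Set V) = S.card := by
    rw [Nat.card_coe_set_eq, Set.ncard_coe_finset]
  rw [hS7] at h7
  omega
end

section
/- In a tree where every vertex of a subset A has degree at least 2, every subset X of A satisfies |N(X)| >= |X|, where N(X) is the set of neighbors of vertices in X outside A (assuming A is independent). -/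
open SimpleGraph Finset

/-- In a tree, two neighbors of `c` that are both strictly closer to `r` than `c`
coincide (uniqueness of the parent). -/
lemma tree_parent_unique {V : Type} (T : SimpleGraph V)
    (hconn : T.Connected) (hacyc : T.IsAcyclic) {r u w c : V}
    (hu : T.Adj u c) (hw : T.Adj w c)
    (hud : T.dist r u < T.dist r c) (hwd : T.dist r w < T.dist r c) : u = w := by
  obtain ⟨p, hp, hpl⟩ := hconn.exists_path_of_dist r u
  obtain ⟨q, hq, hql⟩ := hconn.exists_path_of_dist r w
  have hcu : T.dist r c = T.dist r u + 1 := by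
    have h1 : T.dist r c ≤ T.dist r u + T.dist u c := hconn.dist_triangle
    have h2 : T.dist u c = 1 := SimpleGraph.dist_eq_one_iff_adj.mpr hu
    omega
  have hcw : T.dist r c = T.dist r w + 1 := by
    have h1 : T.dist r c ≤ T.dist r w + T.dist w c := hconn.dist_triangle
    have h2 : T.dist w c = 1 := SimpleGraph.dist_eq_one_iff_adj.mpr hw
    omega
  have hpc : (p.concat hu).IsPath := by
    apply SimpleGraph.Walk.isPath_of_length_eq_dist
    rw [SimpleGraph.Walk.length_concat, hpl, hcu]
  have hqc : (q.concat hw).IsPath := by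
    apply SimpleGraph.Walk.isPath_of_length_eq_dist
    rw [SimpleGraph.Walk.length_concat, hql, hcw]
  have := hacyc.path_unique ⟨p.concat hu, hpc⟩ ⟨q.concat hw, hqc⟩
  have heq : p.concat hu = q.concat hw := congrArg Subtype.val this
  obtain ⟨hv, -⟩ := SimpleGraph.Walk.concat_inj heq
  exact hv

/-- In a tree, adjacent vertices have different distances from any root. -/
lemma tree_adj_dist_ne {V : Type} [DecidableEq V] (T : SimpleGraph V)
    (hconn : T.Connected) (hacyc : T.IsAcyclic) {r u v : V}
    (h : T.Adj u v) : T.dist r u ≠ T.dist r v := by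
  intro hd
  obtain ⟨p, hp, hpl⟩ := hconn.exists_path_of_dist r u
  obtain ⟨q, hq, hql⟩ := hconn.exists_path_of_dist r v
  -- v is not on p
  have hvns : v ∉ p.support := by
    intro hv
    have h1 : T.dist r v ≤ (p.takeUntil v hv).length := SimpleGraph.dist_le _
    have h2 := congrArg SimpleGraph.Walk.length (p.take_spec hv)
    rw [SimpleGraph.Walk.length_append] at h2
    have h3 : (p.dropUntil v hv).length = 0 := by omega
    exact h.ne (SimpleGraph.Walk.eq_of_length_eq_zero h3).symm
  have hpc : (p.concat h).IsPath := by
    rw [← SimpleGraph.Walk.isPath_reverse_iff]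
    rw [SimpleGraph.Walk.reverse_concat]
    exact (SimpleGraph.Walk.isPath_reverse_iff p).mpr hp |>.cons
      (by simpa [SimpleGraph.Walk.support_reverse] using hvns)
  have := hacyc.path_unique ⟨p.concat h, hpc⟩ ⟨q, hq⟩
  have heq : (p.concat h).length = q.length :=
    congrArg (fun P : T.Path r v => P.val.length) this
  rw [SimpleGraph.Walk.length_concat, hpl, hql, hd] at heq
  omega

/-- Every vertex of degree ≥ 2 in a tree has a neighbor strictly farther from `r`. -/
lemma tree_exists_child {V : Type} [Fintype V] [DecidableEq V] (T : SimpleGraph V)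
    [DecidableRel T.Adj]
    (hconn : T.Connected) (hacyc : T.IsAcyclic) (r v : V)
    (hdeg : 2 ≤ T.degree v) :
    ∃ c, T.Adj v c ∧ T.dist r v < T.dist r c := by
  by_contra hno
  push_neg at hno
  -- every neighbor is strictly closer to r
  have hclose : ∀ c ∈ T.neighborFinset v, T.dist r c < T.dist r v := by
    intro c hc
    rw [SimpleGraph.mem_neighborFinset] at hc
    have h1 := hno c hc
    have h2 := tree_adj_dist_ne T hconn hacyc (r := r) hc.symm
    omega
  have hcard : (T.neighborFinset v).card ≤ 1 := by
    apply Finset.card_le_one.mpr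
    intro a ha b hb
    rw [SimpleGraph.mem_neighborFinset] at ha hb
    exact tree_parent_unique T hconn hacyc ha.symm hb.symm
      (hclose a (by rwa [SimpleGraph.mem_neighborFinset]))
      (hclose b (by rwa [SimpleGraph.mem_neighborFinset]))
  rw [SimpleGraph.card_neighborFinset_eq_degree] at hcard
  omega

/-- In a tree T, if A is an independent set in which every vertex has degree at
least 2, then every subset X of A satisfies Hall's condition |N(X)| ≥ |X|,
where N(X) is the set of neighbors of vertices of X. -/
theorem stmt_15 {V : Type} [Fintype V] [DecidableEq V]
    (T : SimpleGraph V) [DecidableRel T.Adj]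
    (hconn : T.Connected) (hacyc : T.IsAcyclic)
    (A : Finset V)
    (hind : ∀ u ∈ A, ∀ v ∈ A, ¬ T.Adj u v)
    (hdeg : ∀ v ∈ A, 2 ≤ T.degree v) :
    ∀ X ⊆ A, X.card ≤ (X.biUnion (fun v => T.neighborFinset v)).card := by
  intro X hXA
  obtain ⟨r⟩ : Nonempty V := hconn.nonempty
  have hchild : ∀ v ∈ X, ∃ c, T.Adj v c ∧ T.dist r v < T.dist r c := by
    intro v hv
    exact tree_exists_child T hconn hacyc r v (hdeg v (hXA hv))
  choose! f hf using hchild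
  apply Finset.card_le_card_of_injOn f
  · intro v hv
    rw [Finset.mem_coe, Finset.mem_biUnion]
    exact ⟨v, hv, (SimpleGraph.mem_neighborFinset _ _ _).mpr (hf v hv).1⟩
  · intro v hv w hw hvw
    obtain ⟨hva, hvd⟩ := hf v hv
    obtain ⟨hwa, hwd⟩ := hf w hw
    rw [hvw] at hva hvd
    exact tree_parent_unique T hconn hacyc hva hwa hvd hwd
end

section
/- Let e_1,...,e_n be a sequence of edges with nondecreasing nonnegative weights w_1 <= ... <= w_n, and associated nonnegative coefficients c_1,...,c_n where index 1 carries a 'negative' coefficient. If for every prefix the signed weighted sum c_1 w_1 >= sum_{1 < k <= r} c_k w_k holds (the running sum stays nonpositive), then the unweighted inequality c_1 >= sum_{1 < k <= n} c_k also holds. -/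
/-- Edges e_1,...,e_n with nondecreasing positive weights w and nonnegative
coefficients c, where index 1 carries a negative coefficient: if for every
prefix c_1·w_1 ≥ Σ_{2 ≤ k ≤ r} c_k·w_k, then c_1 ≥ Σ_{2 ≤ k ≤ n} c_k. -/
theorem stmt_16 (n : ℕ) (hn : 1 ≤ n) (w c : ℕ → ℝ)
    (hwpos : 0 < w 1)
    (hmono : ∀ i j, 1 ≤ i → i ≤ j → j ≤ n → w i ≤ w j)
    (hc : ∀ k, 0 ≤ c k)
    (hprefix : ∀ r, r ≤ n → (∑ k ∈ Finset.Icc 2 r, c k * w k) ≤ c 1 * w 1) :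
    (∑ k ∈ Finset.Icc 2 n, c k) ≤ c 1 := by
  have h1 : (∑ k ∈ Finset.Icc 2 n, c k * w 1) ≤ ∑ k ∈ Finset.Icc 2 n, c k * w k := by
    apply Finset.sum_le_sum
    intro k hk
    simp only [Finset.mem_Icc] at hk
    exact mul_le_mul_of_nonneg_left (hmono 1 k (by omega) (by omega) hk.2) (hc k)
  have h2 := hprefix n le_rfl
  have h3 : (∑ k ∈ Finset.Icc 2 n, c k) * w 1 ≤ c 1 * w 1 := by
    rw [Finset.sum_mul]; exact le_trans h1 h2
  exact le_of_mul_le_mul_right h3 hwpos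
end
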